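/- Let $F$ be a finite field with $q$ elements and $f \in F[x_1,\dots,x_n]$ a nonzero polynomial. Then the number of solutions of $f(x_1,\dots,x_n)=0$ in $F^n$ is at most $(\deg f)\, q^{n-1}$. -/

import Mathlib

open MvPolynomial Polynomial

lemma sz_zero (F : Type*) [Field F] (f : MvPolynomial (Fin 0) F) (hf : f ≠ 0)
    (x : Fin 0 → F) : MvPolynomial.eval x f ≠ 0 := by
  obtain ⟨c, rfl⟩ := MvPolynomial.C_surjective (Fin 0) f
  simpa using fun h => hf (by simp [h])

lemma sz_aux (F : Type*) [Field F] [Fintype F] :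
    ∀ (n : ℕ) (f : MvPolynomial (Fin n) F), f ≠ 0 →
    Nat.card {x : Fin n → F // MvPolynomial.eval x f = 0} * Fintype.card F ≤
      f.totalDegree * Fintype.card F ^ n := by
  intro n
  induction n with
  | zero =>
    intro f hf
    have : IsEmpty {x : Fin 0 → F // MvPolynomial.eval x f = 0} :=
      ⟨fun x => sz_zero F f hf x.1 x.2⟩
    simp [Nat.card_of_isEmpty]
  | succ n ih =>
    intro f hf
    classical
    set q := Fintype.card F with hq
    have hq1 : 1 ≤ q := Fintype.card_pos
    set g := MvPolynomial.finSuccEquiv F n f with hgdef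
    have hg : g ≠ 0 := by
      simpa [hgdef] using (map_ne_zero_iff _ (MvPolynomial.finSuccEquiv F n).injective).mpr hf
    set k := g.natDegree with hk
    set c := g.leadingCoeff with hc0
    have hc : c ≠ 0 := by simpa [hc0] using Polynomial.leadingCoeff_ne_zero.mpr hg
    have hdeg : c.totalDegree + k ≤ f.totalDegree := by
      have := MvPolynomial.totalDegree_coeff_finSuccEquiv_add_le f k
        (by exact hc)
      exact this
    -- split the count as a sum over the tail
    have e : {x : Fin (n+1) → F // MvPolynomial.eval x f = 0} ≃
        Σ s : Fin n → F, {y : F // MvPolynomial.eval (Fin.cons y s) f = 0} :=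
      { toFun := fun x => ⟨Fin.tail x.1, x.1 0, by
          rw [Fin.cons_self_tail]; exact x.2⟩
        invFun := fun p => ⟨Fin.cons p.2.1 p.1, p.2.2⟩
        left_inv := fun x => by simp [Fin.cons_self_tail]
        right_inv := fun p => rfl }
    have hcount : Nat.card {x : Fin (n+1) → F // MvPolynomial.eval x f = 0} =
        ∑ s : Fin n → F, Nat.card {y : F // MvPolynomial.eval (Fin.cons y s) f = 0} := by
      rw [Nat.card_congr e]
      simp [Nat.card_eq_fintype_card, Fintype.card_sigma]
    -- bound each fiber
    have hfib : ∀ s : Fin n → F,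
        Nat.card {y : F // MvPolynomial.eval (Fin.cons y s) f = 0} ≤
          if MvPolynomial.eval s c = 0 then q else k := by
      intro s
      by_cases hs : MvPolynomial.eval s c = 0
      · rw [if_pos hs]
        simpa [Nat.card_eq_fintype_card] using Fintype.card_subtype_le _
      · rw [if_neg hs]
        set p := g.map (MvPolynomial.eval s) with hp
        have hps : p ≠ 0 := by
          intro h
          apply hs
          have h2 : p.coeff k = 0 := by rw [h, Polynomial.coeff_zero]
          rw [hp, Polynomial.coeff_map] at h2
          exact h2
        have hpd : p.natDegree ≤ k := Polynomial.natDegree_map_le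
        have hroots : ∀ y : F, MvPolynomial.eval (Fin.cons y s) f = 0 ↔ p.eval y = 0 := by
          intro y
          rw [MvPolynomial.eval_eq_eval_mv_eval' s y f]
        calc Nat.card {y : F // MvPolynomial.eval (Fin.cons y s) f = 0}
            = (Finset.univ.filter fun y : F => p.eval y = 0).card := by
              rw [Nat.card_eq_fintype_card, Fintype.card_subtype]
              congr 1
              exact Finset.filter_congr fun y _ => by rw [hroots y]
          _ ≤ p.roots.toFinset.card := by
              apply Finset.card_le_card
              intro y hy
              simp only [Finset.mem_filter] at hy
              simp [Polynomial.mem_roots, hps, Polynomial.IsRoot, hy.2]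
          _ ≤ p.roots.card := p.roots.toFinset_card_le
          _ ≤ p.natDegree := Polynomial.card_roots' p
          _ ≤ k := hpd
    -- sum the bounds
    set A := Finset.univ.filter fun s : Fin n → F => MvPolynomial.eval s c = 0 with hA
    have hAcard : A.card = Nat.card {s : Fin n → F // MvPolynomial.eval s c = 0} := by
      rw [Nat.card_eq_fintype_card, Fintype.card_subtype]
    have hsum : Nat.card {x : Fin (n+1) → F // MvPolynomial.eval x f = 0} ≤
        A.card * q + q ^ n * k := by
      rw [hcount]
      calc ∑ s : Fin n → F, Nat.card {y : F // MvPolynomial.eval (Fin.cons y s) f = 0}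
          ≤ ∑ s : Fin n → F, (if MvPolynomial.eval s c = 0 then q else k) :=
            Finset.sum_le_sum fun s _ => hfib s
        _ = A.card * q + (Finset.univ.filter fun s : Fin n → F =>
              ¬ MvPolynomial.eval s c = 0).card * k := by
            rw [Finset.sum_ite, Finset.sum_const, Finset.sum_const, smul_eq_mul, smul_eq_mul]
        _ ≤ A.card * q + q ^ n * k := by
            gcongr
            calc (Finset.univ.filter fun s : Fin n → F =>
                ¬ MvPolynomial.eval s c = 0).card ≤ Fintype.card (Fin n → F) :=
                  Finset.card_filter_le _ _
              _ = q ^ n := by simp [Fintype.card_fun, hq]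
    have hIH : A.card * q ≤ c.totalDegree * q ^ n := by
      rw [hAcard]; exact ih c hc
    calc Nat.card {x : Fin (n+1) → F // MvPolynomial.eval x f = 0} * q
        ≤ (A.card * q + q ^ n * k) * q := by gcongr
      _ = (A.card * q) * q + k * q ^ (n + 1) := by ring
      _ ≤ (c.totalDegree * q ^ n) * q + k * q ^ (n + 1) := by gcongr
      _ = (c.totalDegree + k) * q ^ (n + 1) := by ring
      _ ≤ f.totalDegree * q ^ (n + 1) := by gcongr

theorem stmt_1 (F : Type*) [Field F] [Fintype F] (n : ℕ)
    (f : MvPolynomial (Fin n) F) (hf : f ≠ 0) :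
    Nat.card {x : Fin n → F // MvPolynomial.eval x f = 0} ≤
      f.totalDegree * Fintype.card F ^ (n - 1) := by
  have hq : 0 < Fintype.card F := Fintype.card_pos
  cases n with
  | zero =>
    have : IsEmpty {x : Fin 0 → F // MvPolynomial.eval x f = 0} :=
      ⟨fun x => sz_zero F f hf x.1 x.2⟩
    simp [Nat.card_of_isEmpty]
  | succ n =>
    have h := sz_aux F (n+1) f hf
    have heq : f.totalDegree * Fintype.card F ^ (n + 1) =
        (f.totalDegree * Fintype.card F ^ n) * Fintype.card F := by ring
    rw [heq] at h
    simpa using Nat.le_of_mul_le_mul_right h hq
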